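/- Let K be a field of characteristic not 2, V a K-vector space of dimension 3, and Q a quadratic form on V. Then for every element x of the Clifford algebra of Q, the nested product x * involute (x * reverse (x * involute x)) is a scalar, i.e. it lies in the range of algebraMap K (CliffordAlgebra Q). (This is the paper's second nested three-dimensional determinant formula Det(A) = A⟦A⟦A⟦A⟧₁₃⟧₂⟧₁₃.) -/

import Mathlib

open CliffordAlgebra

set_option maxHeartbeats 3200000

/-- In dimension 3 (char K ≠ 2), the nested product
`x * involute (x * reverse (x * involute x))` is a scalar: the paper's second
nested three-dimensional determinant formula
`Det(A) = A ⟦A ⟦A ⟦A⟧₁₃⟧₂⟧₁₃`. -/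
theorem det_dim_three_nested_second (K V : Type*) [Field K] [AddCommGroup V]
    [Module K V] [FiniteDimensional K V] (h2 : (2 : K) ≠ 0)
    (hdim : Module.finrank K V = 3)
    (Q : QuadraticForm K V) (x : CliffordAlgebra Q) :
    x * involute (x * reverse (x * involute x)) ∈
      Set.range (algebraMap K (CliffordAlgebra Q)) := by
  haveI : Invertible (2 : K) := invertibleOfNonzero h2
  obtain ⟨v, hv⟩ := LinearMap.BilinForm.exists_orthogonal_basis
      (LinearMap.isSymm_def.mpr fun x y => QuadraticMap.associated_isSymm K Q x y :
        (QuadraticMap.associatedHom K Q).IsSymm)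
  let b : Module.Basis (Fin 3) K V := v.reindex (finCongr hdim)
  have horth : ∀ i j : Fin 3, i ≠ j → Q.IsOrtho (b i) (b j) := by
    intro i j hij
    rw [← QuadraticMap.associated_isOrtho]
    have hne : (finCongr hdim).symm i ≠ (finCongr hdim).symm j :=
      fun h => hij (by simpa using congrArg (finCongr hdim) h)
    simpa [b, Module.Basis.reindex_apply] using hv hne
  set e0 : CliffordAlgebra Q := ι Q (b 0) with he0def
  set e1 : CliffordAlgebra Q := ι Q (b 1) with he1def
  set e2 : CliffordAlgebra Q := ι Q (b 2) with he2def
  set q0 : K := Q (b 0) with hq0def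
  set q1 : K := Q (b 1) with hq1def
  set q2 : K := Q (b 2) with hq2def
  have h00 : e0 * e0 = q0 • 1 := by
    rw [he0def, hq0def, ι_sq_scalar, Algebra.algebraMap_eq_smul_one]
  have h11 : e1 * e1 = q1 • 1 := by
    rw [he1def, hq1def, ι_sq_scalar, Algebra.algebraMap_eq_smul_one]
  have h22 : e2 * e2 = q2 • 1 := by
    rw [he2def, hq2def, ι_sq_scalar, Algebra.algebraMap_eq_smul_one]
  have h10 : e1 * e0 = -(e0 * e1) :=
    ι_mul_ι_comm_of_isOrtho (horth 1 0 (by decide))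
  have h20 : e2 * e0 = -(e0 * e2) :=
    ι_mul_ι_comm_of_isOrtho (horth 2 0 (by decide))
  have h21 : e2 * e1 = -(e1 * e2) :=
    ι_mul_ι_comm_of_isOrtho (horth 2 1 (by decide))
  have k00 : ∀ t : CliffordAlgebra Q, e0 * (e0 * t) = q0 • t := by
    intro t; rw [← mul_assoc, h00, smul_mul_assoc, one_mul]
  have k11 : ∀ t : CliffordAlgebra Q, e1 * (e1 * t) = q1 • t := by
    intro t; rw [← mul_assoc, h11, smul_mul_assoc, one_mul]
  have k22 : ∀ t : CliffordAlgebra Q, e2 * (e2 * t) = q2 • t := by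
    intro t; rw [← mul_assoc, h22, smul_mul_assoc, one_mul]
  have k10 : ∀ t : CliffordAlgebra Q, e1 * (e0 * t) = -(e0 * (e1 * t)) := by
    intro t; rw [← mul_assoc, h10, neg_mul, mul_assoc]
  have k20 : ∀ t : CliffordAlgebra Q, e2 * (e0 * t) = -(e0 * (e2 * t)) := by
    intro t; rw [← mul_assoc, h20, neg_mul, mul_assoc]
  have k21 : ∀ t : CliffordAlgebra Q, e2 * (e1 * t) = -(e1 * (e2 * t)) := by
    intro t; rw [← mul_assoc, h21, neg_mul, mul_assoc]
  set E : Fin 3 → CliffordAlgebra Q := ![e0, e1, e2] with hE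
  set M : Fin 8 → CliffordAlgebra Q :=
    ![1, e0, e1, e2, e0 * e1, e0 * e2, e1 * e2, e0 * (e1 * e2)] with hM
  set S : Submodule K (CliffordAlgebra Q) := Submodule.span K (Set.range M) with hS
  have hS1 : (1 : CliffordAlgebra Q) ∈ S := Submodule.subset_span ⟨0, rfl⟩
  have hSe0 : e0 ∈ S := Submodule.subset_span ⟨1, rfl⟩
  have hSe1 : e1 ∈ S := Submodule.subset_span ⟨2, rfl⟩
  have hSe2 : e2 ∈ S := Submodule.subset_span ⟨3, rfl⟩
  have hS01 : e0 * e1 ∈ S := Submodule.subset_span ⟨4, rfl⟩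
  have hS02 : e0 * e2 ∈ S := Submodule.subset_span ⟨5, rfl⟩
  have hS12 : e1 * e2 ∈ S := Submodule.subset_span ⟨6, rfl⟩
  have hS012 : e0 * (e1 * e2) ∈ S := Submodule.subset_span ⟨7, rfl⟩
  have hmul : ∀ i : Fin 3, ∀ s ∈ S, E i * s ∈ S := by
    intro i s hs
    induction hs using Submodule.span_induction with
    | mem t ht =>
      obtain ⟨j, rfl⟩ := ht
      fin_cases i <;> fin_cases j
      · show e0 * 1 ∈ S
        try simp only [mul_assoc, mul_one, one_mul, mul_add, add_mul, mul_neg, neg_mul, neg_neg, smul_neg, smul_mul_assoc, mul_smul_comm, smul_smul, k00, k11, k22, k10, k20, k21, h00, h11, h22, h10, h20, h21]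
        first | exact hS1 | exact hSe0 | exact hSe1 | exact hSe2 | exact hS01 | exact hS02 | exact hS12 | exact hS012 | ((repeat first | apply Submodule.neg_mem | apply Submodule.smul_mem) <;> (first | exact hS1 | exact hSe0 | exact hSe1 | exact hSe2 | exact hS01 | exact hS02 | exact hS12 | exact hS012))
      · show e0 * (e0) ∈ S
        try simp only [mul_assoc, mul_one, one_mul, mul_add, add_mul, mul_neg, neg_mul, neg_neg, smul_neg, smul_mul_assoc, mul_smul_comm, smul_smul, k00, k11, k22, k10, k20, k21, h00, h11, h22, h10, h20, h21]
        first | exact hS1 | exact hSe0 | exact hSe1 | exact hSe2 | exact hS01 | exact hS02 | exact hS12 | exact hS012 | ((repeat first | apply Submodule.neg_mem | apply Submodule.smul_mem) <;> (first | exact hS1 | exact hSe0 | exact hSe1 | exact hSe2 | exact hS01 | exact hS02 | exact hS12 | exact hS012))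
      · show e0 * (e1) ∈ S
        try simp only [mul_assoc, mul_one, one_mul, mul_add, add_mul, mul_neg, neg_mul, neg_neg, smul_neg, smul_mul_assoc, mul_smul_comm, smul_smul, k00, k11, k22, k10, k20, k21, h00, h11, h22, h10, h20, h21]
        first | exact hS1 | exact hSe0 | exact hSe1 | exact hSe2 | exact hS01 | exact hS02 | exact hS12 | exact hS012 | ((repeat first | apply Submodule.neg_mem | apply Submodule.smul_mem) <;> (first | exact hS1 | exact hSe0 | exact hSe1 | exact hSe2 | exact hS01 | exact hS02 | exact hS12 | exact hS012))
      · show e0 * (e2) ∈ S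
        try simp only [mul_assoc, mul_one, one_mul, mul_add, add_mul, mul_neg, neg_mul, neg_neg, smul_neg, smul_mul_assoc, mul_smul_comm, smul_smul, k00, k11, k22, k10, k20, k21, h00, h11, h22, h10, h20, h21]
        first | exact hS1 | exact hSe0 | exact hSe1 | exact hSe2 | exact hS01 | exact hS02 | exact hS12 | exact hS012 | ((repeat first | apply Submodule.neg_mem | apply Submodule.smul_mem) <;> (first | exact hS1 | exact hSe0 | exact hSe1 | exact hSe2 | exact hS01 | exact hS02 | exact hS12 | exact hS012))
      · show e0 * (e0 * e1) ∈ S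
        try simp only [mul_assoc, mul_one, one_mul, mul_add, add_mul, mul_neg, neg_mul, neg_neg, smul_neg, smul_mul_assoc, mul_smul_comm, smul_smul, k00, k11, k22, k10, k20, k21, h00, h11, h22, h10, h20, h21]
        first | exact hS1 | exact hSe0 | exact hSe1 | exact hSe2 | exact hS01 | exact hS02 | exact hS12 | exact hS012 | ((repeat first | apply Submodule.neg_mem | apply Submodule.smul_mem) <;> (first | exact hS1 | exact hSe0 | exact hSe1 | exact hSe2 | exact hS01 | exact hS02 | exact hS12 | exact hS012))
      · show e0 * (e0 * e2) ∈ S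
        try simp only [mul_assoc, mul_one, one_mul, mul_add, add_mul, mul_neg, neg_mul, neg_neg, smul_neg, smul_mul_assoc, mul_smul_comm, smul_smul, k00, k11, k22, k10, k20, k21, h00, h11, h22, h10, h20, h21]
        first | exact hS1 | exact hSe0 | exact hSe1 | exact hSe2 | exact hS01 | exact hS02 | exact hS12 | exact hS012 | ((repeat first | apply Submodule.neg_mem | apply Submodule.smul_mem) <;> (first | exact hS1 | exact hSe0 | exact hSe1 | exact hSe2 | exact hS01 | exact hS02 | exact hS12 | exact hS012))
      · show e0 * (e1 * e2) ∈ S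
        try simp only [mul_assoc, mul_one, one_mul, mul_add, add_mul, mul_neg, neg_mul, neg_neg, smul_neg, smul_mul_assoc, mul_smul_comm, smul_smul, k00, k11, k22, k10, k20, k21, h00, h11, h22, h10, h20, h21]
        first | exact hS1 | exact hSe0 | exact hSe1 | exact hSe2 | exact hS01 | exact hS02 | exact hS12 | exact hS012 | ((repeat first | apply Submodule.neg_mem | apply Submodule.smul_mem) <;> (first | exact hS1 | exact hSe0 | exact hSe1 | exact hSe2 | exact hS01 | exact hS02 | exact hS12 | exact hS012))
      · show e0 * (e0 * (e1 * e2)) ∈ S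
        try simp only [mul_assoc, mul_one, one_mul, mul_add, add_mul, mul_neg, neg_mul, neg_neg, smul_neg, smul_mul_assoc, mul_smul_comm, smul_smul, k00, k11, k22, k10, k20, k21, h00, h11, h22, h10, h20, h21]
        first | exact hS1 | exact hSe0 | exact hSe1 | exact hSe2 | exact hS01 | exact hS02 | exact hS12 | exact hS012 | ((repeat first | apply Submodule.neg_mem | apply Submodule.smul_mem) <;> (first | exact hS1 | exact hSe0 | exact hSe1 | exact hSe2 | exact hS01 | exact hS02 | exact hS12 | exact hS012))
      · show e1 * 1 ∈ S
        try simp only [mul_assoc, mul_one, one_mul, mul_add, add_mul, mul_neg, neg_mul, neg_neg, smul_neg, smul_mul_assoc, mul_smul_comm, smul_smul, k00, k11, k22, k10, k20, k21, h00, h11, h22, h10, h20, h21]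
        first | exact hS1 | exact hSe0 | exact hSe1 | exact hSe2 | exact hS01 | exact hS02 | exact hS12 | exact hS012 | ((repeat first | apply Submodule.neg_mem | apply Submodule.smul_mem) <;> (first | exact hS1 | exact hSe0 | exact hSe1 | exact hSe2 | exact hS01 | exact hS02 | exact hS12 | exact hS012))
      · show e1 * (e0) ∈ S
        try simp only [mul_assoc, mul_one, one_mul, mul_add, add_mul, mul_neg, neg_mul, neg_neg, smul_neg, smul_mul_assoc, mul_smul_comm, smul_smul, k00, k11, k22, k10, k20, k21, h00, h11, h22, h10, h20, h21]
        first | exact hS1 | exact hSe0 | exact hSe1 | exact hSe2 | exact hS01 | exact hS02 | exact hS12 | exact hS012 | ((repeat first | apply Submodule.neg_mem | apply Submodule.smul_mem) <;> (first | exact hS1 | exact hSe0 | exact hSe1 | exact hSe2 | exact hS01 | exact hS02 | exact hS12 | exact hS012))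
      · show e1 * (e1) ∈ S
        try simp only [mul_assoc, mul_one, one_mul, mul_add, add_mul, mul_neg, neg_mul, neg_neg, smul_neg, smul_mul_assoc, mul_smul_comm, smul_smul, k00, k11, k22, k10, k20, k21, h00, h11, h22, h10, h20, h21]
        first | exact hS1 | exact hSe0 | exact hSe1 | exact hSe2 | exact hS01 | exact hS02 | exact hS12 | exact hS012 | ((repeat first | apply Submodule.neg_mem | apply Submodule.smul_mem) <;> (first | exact hS1 | exact hSe0 | exact hSe1 | exact hSe2 | exact hS01 | exact hS02 | exact hS12 | exact hS012))
      · show e1 * (e2) ∈ S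
        try simp only [mul_assoc, mul_one, one_mul, mul_add, add_mul, mul_neg, neg_mul, neg_neg, smul_neg, smul_mul_assoc, mul_smul_comm, smul_smul, k00, k11, k22, k10, k20, k21, h00, h11, h22, h10, h20, h21]
        first | exact hS1 | exact hSe0 | exact hSe1 | exact hSe2 | exact hS01 | exact hS02 | exact hS12 | exact hS012 | ((repeat first | apply Submodule.neg_mem | apply Submodule.smul_mem) <;> (first | exact hS1 | exact hSe0 | exact hSe1 | exact hSe2 | exact hS01 | exact hS02 | exact hS12 | exact hS012))
      · show e1 * (e0 * e1) ∈ S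
        try simp only [mul_assoc, mul_one, one_mul, mul_add, add_mul, mul_neg, neg_mul, neg_neg, smul_neg, smul_mul_assoc, mul_smul_comm, smul_smul, k00, k11, k22, k10, k20, k21, h00, h11, h22, h10, h20, h21]
        first | exact hS1 | exact hSe0 | exact hSe1 | exact hSe2 | exact hS01 | exact hS02 | exact hS12 | exact hS012 | ((repeat first | apply Submodule.neg_mem | apply Submodule.smul_mem) <;> (first | exact hS1 | exact hSe0 | exact hSe1 | exact hSe2 | exact hS01 | exact hS02 | exact hS12 | exact hS012))
      · show e1 * (e0 * e2) ∈ S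
        try simp only [mul_assoc, mul_one, one_mul, mul_add, add_mul, mul_neg, neg_mul, neg_neg, smul_neg, smul_mul_assoc, mul_smul_comm, smul_smul, k00, k11, k22, k10, k20, k21, h00, h11, h22, h10, h20, h21]
        first | exact hS1 | exact hSe0 | exact hSe1 | exact hSe2 | exact hS01 | exact hS02 | exact hS12 | exact hS012 | ((repeat first | apply Submodule.neg_mem | apply Submodule.smul_mem) <;> (first | exact hS1 | exact hSe0 | exact hSe1 | exact hSe2 | exact hS01 | exact hS02 | exact hS12 | exact hS012))
      · show e1 * (e1 * e2) ∈ S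
        try simp only [mul_assoc, mul_one, one_mul, mul_add, add_mul, mul_neg, neg_mul, neg_neg, smul_neg, smul_mul_assoc, mul_smul_comm, smul_smul, k00, k11, k22, k10, k20, k21, h00, h11, h22, h10, h20, h21]
        first | exact hS1 | exact hSe0 | exact hSe1 | exact hSe2 | exact hS01 | exact hS02 | exact hS12 | exact hS012 | ((repeat first | apply Submodule.neg_mem | apply Submodule.smul_mem) <;> (first | exact hS1 | exact hSe0 | exact hSe1 | exact hSe2 | exact hS01 | exact hS02 | exact hS12 | exact hS012))
      · show e1 * (e0 * (e1 * e2)) ∈ S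
        try simp only [mul_assoc, mul_one, one_mul, mul_add, add_mul, mul_neg, neg_mul, neg_neg, smul_neg, smul_mul_assoc, mul_smul_comm, smul_smul, k00, k11, k22, k10, k20, k21, h00, h11, h22, h10, h20, h21]
        first | exact hS1 | exact hSe0 | exact hSe1 | exact hSe2 | exact hS01 | exact hS02 | exact hS12 | exact hS012 | ((repeat first | apply Submodule.neg_mem | apply Submodule.smul_mem) <;> (first | exact hS1 | exact hSe0 | exact hSe1 | exact hSe2 | exact hS01 | exact hS02 | exact hS12 | exact hS012))
      · show e2 * 1 ∈ S
        try simp only [mul_assoc, mul_one, one_mul, mul_add, add_mul, mul_neg, neg_mul, neg_neg, smul_neg, smul_mul_assoc, mul_smul_comm, smul_smul, k00, k11, k22, k10, k20, k21, h00, h11, h22, h10, h20, h21]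
        first | exact hS1 | exact hSe0 | exact hSe1 | exact hSe2 | exact hS01 | exact hS02 | exact hS12 | exact hS012 | ((repeat first | apply Submodule.neg_mem | apply Submodule.smul_mem) <;> (first | exact hS1 | exact hSe0 | exact hSe1 | exact hSe2 | exact hS01 | exact hS02 | exact hS12 | exact hS012))
      · show e2 * (e0) ∈ S
        try simp only [mul_assoc, mul_one, one_mul, mul_add, add_mul, mul_neg, neg_mul, neg_neg, smul_neg, smul_mul_assoc, mul_smul_comm, smul_smul, k00, k11, k22, k10, k20, k21, h00, h11, h22, h10, h20, h21]
        first | exact hS1 | exact hSe0 | exact hSe1 | exact hSe2 | exact hS01 | exact hS02 | exact hS12 | exact hS012 | ((repeat first | apply Submodule.neg_mem | apply Submodule.smul_mem) <;> (first | exact hS1 | exact hSe0 | exact hSe1 | exact hSe2 | exact hS01 | exact hS02 | exact hS12 | exact hS012))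
      · show e2 * (e1) ∈ S
        try simp only [mul_assoc, mul_one, one_mul, mul_add, add_mul, mul_neg, neg_mul, neg_neg, smul_neg, smul_mul_assoc, mul_smul_comm, smul_smul, k00, k11, k22, k10, k20, k21, h00, h11, h22, h10, h20, h21]
        first | exact hS1 | exact hSe0 | exact hSe1 | exact hSe2 | exact hS01 | exact hS02 | exact hS12 | exact hS012 | ((repeat first | apply Submodule.neg_mem | apply Submodule.smul_mem) <;> (first | exact hS1 | exact hSe0 | exact hSe1 | exact hSe2 | exact hS01 | exact hS02 | exact hS12 | exact hS012))
      · show e2 * (e2) ∈ S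
        try simp only [mul_assoc, mul_one, one_mul, mul_add, add_mul, mul_neg, neg_mul, neg_neg, smul_neg, smul_mul_assoc, mul_smul_comm, smul_smul, k00, k11, k22, k10, k20, k21, h00, h11, h22, h10, h20, h21]
        first | exact hS1 | exact hSe0 | exact hSe1 | exact hSe2 | exact hS01 | exact hS02 | exact hS12 | exact hS012 | ((repeat first | apply Submodule.neg_mem | apply Submodule.smul_mem) <;> (first | exact hS1 | exact hSe0 | exact hSe1 | exact hSe2 | exact hS01 | exact hS02 | exact hS12 | exact hS012))
      · show e2 * (e0 * e1) ∈ S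
        try simp only [mul_assoc, mul_one, one_mul, mul_add, add_mul, mul_neg, neg_mul, neg_neg, smul_neg, smul_mul_assoc, mul_smul_comm, smul_smul, k00, k11, k22, k10, k20, k21, h00, h11, h22, h10, h20, h21]
        first | exact hS1 | exact hSe0 | exact hSe1 | exact hSe2 | exact hS01 | exact hS02 | exact hS12 | exact hS012 | ((repeat first | apply Submodule.neg_mem | apply Submodule.smul_mem) <;> (first | exact hS1 | exact hSe0 | exact hSe1 | exact hSe2 | exact hS01 | exact hS02 | exact hS12 | exact hS012))
      · show e2 * (e0 * e2) ∈ S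
        try simp only [mul_assoc, mul_one, one_mul, mul_add, add_mul, mul_neg, neg_mul, neg_neg, smul_neg, smul_mul_assoc, mul_smul_comm, smul_smul, k00, k11, k22, k10, k20, k21, h00, h11, h22, h10, h20, h21]
        first | exact hS1 | exact hSe0 | exact hSe1 | exact hSe2 | exact hS01 | exact hS02 | exact hS12 | exact hS012 | ((repeat first | apply Submodule.neg_mem | apply Submodule.smul_mem) <;> (first | exact hS1 | exact hSe0 | exact hSe1 | exact hSe2 | exact hS01 | exact hS02 | exact hS12 | exact hS012))
      · show e2 * (e1 * e2) ∈ S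
        try simp only [mul_assoc, mul_one, one_mul, mul_add, add_mul, mul_neg, neg_mul, neg_neg, smul_neg, smul_mul_assoc, mul_smul_comm, smul_smul, k00, k11, k22, k10, k20, k21, h00, h11, h22, h10, h20, h21]
        first | exact hS1 | exact hSe0 | exact hSe1 | exact hSe2 | exact hS01 | exact hS02 | exact hS12 | exact hS012 | ((repeat first | apply Submodule.neg_mem | apply Submodule.smul_mem) <;> (first | exact hS1 | exact hSe0 | exact hSe1 | exact hSe2 | exact hS01 | exact hS02 | exact hS12 | exact hS012))
      · show e2 * (e0 * (e1 * e2)) ∈ S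
        try simp only [mul_assoc, mul_one, one_mul, mul_add, add_mul, mul_neg, neg_mul, neg_neg, smul_neg, smul_mul_assoc, mul_smul_comm, smul_smul, k00, k11, k22, k10, k20, k21, h00, h11, h22, h10, h20, h21]
        first | exact hS1 | exact hSe0 | exact hSe1 | exact hSe2 | exact hS01 | exact hS02 | exact hS12 | exact hS012 | ((repeat first | apply Submodule.neg_mem | apply Submodule.smul_mem) <;> (first | exact hS1 | exact hSe0 | exact hSe1 | exact hSe2 | exact hS01 | exact hS02 | exact hS12 | exact hS012))
    | zero => rw [mul_zero]; exact Submodule.zero_mem S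
    | add y z _ _ hy hz => rw [mul_add]; exact Submodule.add_mem S hy hz
    | smul a y _ hy => rw [mul_smul_comm]; exact Submodule.smul_mem S a hy
  have key : ∀ y : CliffordAlgebra Q, ∀ s ∈ S, y * s ∈ S := by
    intro y
    induction y using CliffordAlgebra.induction with
    | algebraMap r =>
      intro s hs
      rw [← Algebra.smul_def]
      exact Submodule.smul_mem S r hs
    | ι w =>
      intro s hs
      have hw : ι Q w = ∑ i : Fin 3, b.repr w i • (E i) := by
        conv_lhs => rw [← b.sum_repr w]
        rw [map_sum]
        refine Finset.sum_congr rfl fun i _ => ?_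
        rw [map_smul]
        congr 1
        fin_cases i <;> rfl
      rw [hw, Finset.sum_mul]
      refine Submodule.sum_mem S fun i _ => ?_
      rw [smul_mul_assoc]
      exact Submodule.smul_mem S _ (hmul i s hs)
    | mul a c ha hc =>
      intro s hs
      rw [mul_assoc]
      exact ha _ (hc _ hs)
    | add a c ha hc =>
      intro s hs
      rw [add_mul]
      exact Submodule.add_mem S (ha _ hs) (hc _ hs)
  have hx : x ∈ S := by simpa using key x 1 hS1
  obtain ⟨c, hc⟩ := (Submodule.mem_span_range_iff_exists_fun K).mp hx
  rw [Fin.sum_univ_eight] at hc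
  rw [show M 0 = 1 from rfl, show M 1 = e0 from rfl, show M 2 = e1 from rfl,
    show M 3 = e2 from rfl, show M 4 = e0 * e1 from rfl, show M 5 = e0 * e2 from rfl,
    show M 6 = e1 * e2 from rfl, show M 7 = e0 * (e1 * e2) from rfl] at hc
  have ie0 : involute e0 = -e0 := by rw [he0def, involute_ι]
  have ie1 : involute e1 = -e1 := by rw [he1def, involute_ι]
  have ie2 : involute e2 = -e2 := by rw [he2def, involute_ι]
  have re0 : reverse e0 = e0 := by rw [he0def, reverse_ι]
  have re1 : reverse e1 = e1 := by rw [he1def, reverse_ι]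
  have re2 : reverse e2 = e2 := by rw [he2def, reverse_ι]
  have hinv : involute x = c 0 • (1 : CliffordAlgebra Q) + (-c 1) • e0 + (-c 2) • e1
      + (-c 3) • e2 + c 4 • (e0 * e1) + c 5 • (e0 * e2) + c 6 • (e1 * e2)
      + (-c 7) • (e0 * (e1 * e2)) := by
    rw [← hc]
    simp only [map_add, map_smul, map_one, map_mul, ie0, ie1, ie2,
      mul_neg, neg_mul, neg_neg, smul_neg, neg_smul]
  have hu : x * involute x = (c 0^2 - q0*c 1^2 - q1*c 2^2 - q2*c 3^2 - q0*q1*c 4^2 - q0*q2*c 5^2 - q1*q2*c 6^2 + q0*q1*q2*c 7^2) • (1 : CliffordAlgebra Q) + (-(2*(q1*c 2*c 4 + q2*c 3*c 5))) • e0 + (2*(q0*c 1*c 4 - q2*c 3*c 6)) • e1 + (2*(q0*c 1*c 5 + q1*c 2*c 6)) • e2 + (2*(c 0*c 4 - q2*c 3*c 7)) • (e0 * e1) + (2*(c 0*c 5 + q1*c 2*c 7)) • (e0 * e2) + (2*(c 0*c 6 - q0*c 1*c 7)) • (e1 * e2) := by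
    rw [hinv, ← hc]
    simp only [mul_assoc, mul_one, one_mul, mul_add, add_mul, mul_neg, neg_mul, neg_neg, smul_neg, smul_mul_assoc, mul_smul_comm, smul_smul, k00, k11, k22, k10, k20, k21, h00, h11, h22, h10, h20, h21]
    match_scalars <;> ring
  have hconj : involute (reverse (x * involute x)) = (c 0^2 - q0*c 1^2 - q1*c 2^2 - q2*c 3^2 - q0*q1*c 4^2 - q0*q2*c 5^2 - q1*q2*c 6^2 + q0*q1*q2*c 7^2) • (1 : CliffordAlgebra Q) + (-(-(2*(q1*c 2*c 4 + q2*c 3*c 5)))) • e0 + (-(2*(q0*c 1*c 4 - q2*c 3*c 6))) • e1 + (-(2*(q0*c 1*c 5 + q1*c 2*c 6))) • e2 + (-(2*(c 0*c 4 - q2*c 3*c 7))) • (e0 * e1) + (-(2*(c 0*c 5 + q1*c 2*c 7))) • (e0 * e2) + (-(2*(c 0*c 6 - q0*c 1*c 7))) • (e1 * e2) := by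
    rw [hu]
    simp only [map_add, map_neg, map_smul, map_one, map_mul, reverse.map_mul, reverse.map_one,
      ie0, ie1, ie2, re0, re1, re2, mul_neg, neg_mul, neg_neg, smul_neg, neg_smul,
      h10, h20, h21]
    try (match_scalars <;> ring)
  refine ⟨((c 0^2 - q0*c 1^2 - q1*c 2^2 - q2*c 3^2 - q0*q1*c 4^2 - q0*q2*c 5^2 - q1*q2*c 6^2 + q0*q1*q2*c 7^2)^2 - q0*(-(2*(q1*c 2*c 4 + q2*c 3*c 5)))^2 - q1*(2*(q0*c 1*c 4 - q2*c 3*c 6))^2 - q2*(2*(q0*c 1*c 5 + q1*c 2*c 6))^2 + q0*q1*(2*(c 0*c 4 - q2*c 3*c 7))^2 + q0*q2*(2*(c 0*c 5 + q1*c 2*c 7))^2 + q1*q2*(2*(c 0*c 6 - q0*c 1*c 7))^2), ?_⟩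
  have step : x * involute (x * reverse (x * involute x))
      = (x * involute x) * involute (reverse (x * involute x)) := by
    simp only [map_mul, mul_assoc]
  rw [step, hconj, hu, Algebra.algebraMap_eq_smul_one]
  simp only [mul_assoc, mul_one, one_mul, mul_add, add_mul, mul_neg, neg_mul, neg_neg, smul_neg, smul_mul_assoc, mul_smul_comm, smul_smul, k00, k11, k22, k10, k20, k21, h00, h11, h22, h10, h20, h21]
  match_scalars <;> ring
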